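/- arXiv:1002.3844 — 3 statements merged into one kernel-verified Lean document; each statement's English description precedes it below -/
import Mathlib

section
/- For every integer n ≥ 0, the number of vectors p ∈ ℤ⁶ with |p_i| ≤ n for all i and p_1+⋯+p_6 even equals 32n⁶ + 96n⁵ + 120n⁴ + 80n³ + 30n² + 6n + 1; moreover, for every integer n ≥ 1, the number of vectors p ∈ ℤ⁶ with max_i |p_i| = n and even coordinate sum equals 4n(1+12n²)(3+4n²). -/
private def χ (x : ℤ) : ℤ := if Even x then 1 else -1

private lemma χ_add (a b : ℤ) : χ (a + b) = χ a * χ b := by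
  unfold χ
  by_cases ha : Even a <;> by_cases hb : Even b <;> simp [Int.even_add, ha, hb]

private lemma χ_zero : χ 0 = 1 := by simp [χ]

private lemma χ_sum (f : Fin 6 → ℤ) : χ (∑ i, f i) = ∏ i, χ (f i) := by
  classical
  induction (Finset.univ : Finset (Fin 6)) using Finset.cons_induction with
  | empty => simp [χ_zero]
  | cons a s ha ih => rw [Finset.sum_cons, Finset.prod_cons, χ_add, ih]

private lemma χ_natCast (m : ℕ) : χ (m : ℤ) = (-1) ^ m := by
  rcases Nat.even_or_odd m with h | h
  · simp [χ, Int.even_coe_nat, h, h.neg_one_pow]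
  · simp [χ, Int.even_coe_nat, Nat.not_even_iff_odd.2 h, h.neg_one_pow]

private lemma χ_neg (x : ℤ) : χ (-x) = χ x := by simp [χ]

private lemma sum_Icc_χ (n : ℕ) : ∑ x ∈ Finset.Icc (-(n : ℤ)) n, χ x = (-1) ^ n := by
  induction n with
  | zero => simp [χ_zero]
  | succ n ih =>
    have hset : Finset.Icc (-((n : ℤ) + 1)) ((n : ℤ) + 1) =
        insert (-((n : ℤ) + 1)) (insert ((n : ℤ) + 1) (Finset.Icc (-(n : ℤ)) n)) := by
      ext x; simp [Finset.mem_Icc]; omega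
    push_cast
    rw [hset, Finset.sum_insert (by intro h; simp [Finset.mem_Icc] at h; omega),
      Finset.sum_insert (by intro h; simp [Finset.mem_Icc] at h), ih, χ_neg]
    have : ((n : ℤ) + 1) = ((n + 1 : ℕ) : ℤ) := by push_cast; ring
    rw [this, χ_natCast]
    ring

private noncomputable def B (n : ℕ) : Finset (Fin 6 → ℤ) :=
  (Fintype.piFinset fun _ => Finset.Icc (-(n : ℤ)) n).filter fun p => Even (∑ i, p i)

private lemma card_B (n : ℕ) : (B n).card = 32 * n ^ 6 + 96 * n ^ 5 + 120 * n ^ 4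
    + 80 * n ^ 3 + 30 * n ^ 2 + 6 * n + 1 := by
  classical
  set T : Finset (Fin 6 → ℤ) := Fintype.piFinset fun _ => Finset.Icc (-(n : ℤ)) n with hT
  have hTcard : T.card = (2 * n + 1) ^ 6 := by
    rw [hT, Fintype.card_piFinset]
    simp [Int.card_Icc]
    omega
  have hsum : ∑ p ∈ T, χ (∑ i, p i) = 1 := by
    have h1 : ∑ p ∈ T, χ (∑ i, p i) = ∑ p ∈ T, ∏ i, χ (p i) := by
      apply Finset.sum_congr rfl; intro p _; exact χ_sum p
    rw [h1, hT, ← Finset.prod_univ_sum]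
    simp [sum_Icc_χ n, ← pow_mul, pow_mul']
  have hsplit : ∑ p ∈ T, χ (∑ i, p i) =
      ((B n).card : ℤ) - ((T.card : ℤ) - (B n).card) := by
    rw [← Finset.sum_filter_add_sum_filter_not T (fun p => Even (∑ i, p i))]
    have h1 : ∑ p ∈ T.filter (fun p => Even (∑ i, p i)), χ (∑ i, p i)
        = ((B n).card : ℤ) := by
      rw [Finset.sum_congr rfl (fun p hp => ?_), Finset.sum_const, nsmul_eq_mul, mul_one]
      · rfl
      · simp only [Finset.mem_filter] at hp; simp [χ, hp.2]
    have h2 : ∑ p ∈ T.filter (fun p => ¬ Even (∑ i, p i)), χ (∑ i, p i)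
        = -(((T.filter (fun p => ¬ Even (∑ i, p i))).card : ℤ)) := by
      rw [Finset.sum_congr rfl (fun p hp => ?_), Finset.sum_const, nsmul_eq_mul, mul_neg_one]
      simp only [Finset.mem_filter] at hp; simp [χ, hp.2]
    rw [h1, h2, Finset.filter_not, Finset.card_sdiff_of_subset (Finset.filter_subset _ _)]
    have hle : (B n).card ≤ T.card := Finset.card_filter_le _ _
    have hc : ((T.card - (B n).card : ℕ) : ℤ) = (T.card : ℤ) - (B n).card := by
      push_cast [Nat.cast_sub hle]; ring
    rw [show (T.filter fun p => Even (∑ i, p i)) = B n from rfl, hc]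
    ring
  have key : 2 * (B n).card = T.card + 1 := by
    have h := hsplit.symm.trans hsum
    clear_value T
    generalize hA : (B n).card = a at h ⊢
    generalize hBc : T.card = b at h ⊢
    clear hsplit hsum hT hTcard
    omega
  have hpoly : (2 * n + 1) ^ 6 + 1 = 2 * (32 * n ^ 6 + 96 * n ^ 5 + 120 * n ^ 4
      + 80 * n ^ 3 + 30 * n ^ 2 + 6 * n + 1) := by ring
  have key2 : 2 * (B n).card = 2 * (32 * n ^ 6 + 96 * n ^ 5 + 120 * n ^ 4
      + 80 * n ^ 3 + 30 * n ^ 2 + 6 * n + 1) := by rw [key, hTcard, hpoly]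
  exact Nat.eq_of_mul_eq_mul_left (by norm_num) key2

/-- `D6b n` : the number of vectors `p ∈ ℤ⁶` with `|p i| ≤ n` for all `i`
and even coordinate sum (bulk count for the `D₆` lattice). -/
noncomputable def D6b (n : ℕ) : ℕ :=
  Nat.card {p : Fin 6 → ℤ // (∀ i, |p i| ≤ (n : ℤ)) ∧ Even (∑ i, p i)}

/-- `D6s n` : the number of vectors `p ∈ ℤ⁶` with `max_i |p i| = n`
and even coordinate sum (surface count for the `D₆` lattice). -/
noncomputable def D6s (n : ℕ) : ℕ :=
  Nat.card {p : Fin 6 → ℤ //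
    (∀ i, |p i| ≤ (n : ℤ)) ∧ (∃ i, |p i| = (n : ℤ)) ∧ Even (∑ i, p i)}

private lemma D6b_eq (n : ℕ) : D6b n = (B n).card := by
  rw [D6b]
  have e : {p : Fin 6 → ℤ // (∀ i, |p i| ≤ (n : ℤ)) ∧ Even (∑ i, p i)} ≃ {p // p ∈ B n} :=
    Equiv.subtypeEquivRight (fun p => by
      simp [B, Fintype.mem_piFinset, Finset.mem_Icc, abs_le])
  rw [Nat.card_congr e]
  exact Nat.card_eq_finsetCard _

private lemma Bsub (m : ℕ) : B m ⊆ B (m + 1) := by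
  intro p hp
  simp only [B, Finset.mem_filter, Fintype.mem_piFinset, Finset.mem_Icc] at *
  push_cast
  exact ⟨fun i => ⟨by linarith [(hp.1 i).1], by linarith [(hp.1 i).2]⟩, hp.2⟩

private lemma D6s_eq (m : ℕ) : D6s (m + 1) = (B (m + 1)).card - (B m).card := by
  rw [D6s, ← Finset.card_sdiff_of_subset (Bsub m)]
  have e : {p : Fin 6 → ℤ //
      (∀ i, |p i| ≤ ((m + 1 : ℕ) : ℤ)) ∧ (∃ i, |p i| = ((m + 1 : ℕ) : ℤ)) ∧ Even (∑ i, p i)}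
      ≃ {p // p ∈ B (m + 1) \ B m} :=
    Equiv.subtypeEquivRight (fun p => by
      simp only [B, Finset.mem_sdiff, Finset.mem_filter, Fintype.mem_piFinset,
        Finset.mem_Icc, ← abs_le, not_and]
      push_cast
      constructor
      · rintro ⟨h1, ⟨i, hi⟩, h3⟩
        refine ⟨⟨h1, h3⟩, fun h _ => ?_⟩
        have := h i
        omega
      · rintro ⟨⟨h1, h2⟩, h3⟩
        refine ⟨h1, ?_, h2⟩
        by_contra hc
        push_neg at hc
        exact (h3 (fun i => by have := h1 i; have := hc i; omega)) h2)
  rw [Nat.card_congr e]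
  exact Nat.card_eq_finsetCard _

theorem D6_bulk_surface :
    (∀ n : ℕ, D6b n = 32 * n ^ 6 + 96 * n ^ 5 + 120 * n ^ 4 + 80 * n ^ 3
      + 30 * n ^ 2 + 6 * n + 1) ∧
    (∀ n : ℕ, 1 ≤ n → D6s n = 4 * n * (1 + 12 * n ^ 2) * (3 + 4 * n ^ 2)) := by
  have hb : ∀ n : ℕ, D6b n = 32 * n ^ 6 + 96 * n ^ 5 + 120 * n ^ 4 + 80 * n ^ 3
      + 30 * n ^ 2 + 6 * n + 1 := fun n => (D6b_eq n).trans (card_B n)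
  refine ⟨hb, ?_⟩
  intro n hn
  obtain ⟨m, rfl⟩ : ∃ m, n = m + 1 := ⟨n - 1, by omega⟩
  rw [D6s_eq, card_B, card_B]
  have h : (32 * m ^ 6 + 96 * m ^ 5 + 120 * m ^ 4 + 80 * m ^ 3 + 30 * m ^ 2 + 6 * m + 1)
      + 4 * (m + 1) * (1 + 12 * (m + 1) ^ 2) * (3 + 4 * (m + 1) ^ 2)
      = 32 * (m + 1) ^ 6 + 96 * (m + 1) ^ 5 + 120 * (m + 1) ^ 4 + 80 * (m + 1) ^ 3
        + 30 * (m + 1) ^ 2 + 6 * (m + 1) + 1 := by ring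
  omega
end

section
/- For every integer n ≥ 0, 3·A_3^b(n) = 3 + 2n(7 + 12n + 8n²); moreover, for every integer n ≥ 1, A_3^s(n) = 2 + 16n². -/
open Finset

/-- `Akb k n` : the number of vectors `p ∈ ℤ^(k+1)` with `|p i| ≤ n` for all `i`
and zero coordinate sum (bulk count for the `A_k` lattice). -/
noncomputable def Akb (k n : ℕ) : ℕ :=
  Nat.card {p : Fin (k + 1) → ℤ // (∀ i, |p i| ≤ (n : ℤ)) ∧ ∑ i, p i = 0}

/-- `Aks k n` : the number of vectors `p ∈ ℤ^(k+1)` with `max_i |p i| = n`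
and zero coordinate sum (surface count for the `A_k` lattice). -/
noncomputable def Aks (k n : ℕ) : ℕ :=
  Nat.card {p : Fin (k + 1) → ℤ //
    (∀ i, |p i| ≤ (n : ℤ)) ∧ (∃ i, |p i| = (n : ℤ)) ∧ ∑ i, p i = 0}

private lemma icc_succ (m : ℕ) :
    Finset.Icc (-(m+1:ℤ)) (m+1) = insert (-(m+1:ℤ)) (insert ((m+1:ℤ)) (Finset.Icc (-(m:ℤ)) m)) := by
  ext x; simp [Finset.mem_Icc]; omega

private lemma sum_zero' (m : ℕ) : ∑ b ∈ Finset.Icc (-(m:ℤ)) m, b = 0 := by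
  induction m with
  | zero => simp
  | succ m ih => push_cast; rw [icc_succ, Finset.sum_insert (by simp [Finset.mem_Icc]; try omega),
      Finset.sum_insert (by simp [Finset.mem_Icc]; try omega), ih]; ring

private lemma sum_sq' (m : ℕ) : 3 * ∑ b ∈ Finset.Icc (-(m:ℤ)) m, b^2 = m*(m+1)*(2*m+1) := by
  induction m with
  | zero => simp
  | succ m ih => push_cast; rw [icc_succ, Finset.sum_insert (by simp [Finset.mem_Icc]; try omega),
      Finset.sum_insert (by simp [Finset.mem_Icc]; try omega), mul_add, mul_add, ih]
                 ring

private lemma card_icc' (m : ℕ) : (Finset.Icc (-(m:ℤ)) m).card = 2*m+1 := by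
  rw [Int.card_Icc]; omega

private lemma sum_abs_add (m : ℕ) : ∀ a : ℤ, |a| ≤ m →
    ∑ b ∈ Finset.Icc (-(m:ℤ)) m, |a + b| = m*(m+1) + a^2 := by
  induction m with
  | zero =>
      intro a ha
      have h0 := abs_le.mp ha
      have : a = 0 := by push_cast at h0; omega
      subst this; simp
  | succ m ih =>
      intro a ha
      have ha' := abs_le.mp ha
      push_cast at ha'
      rcases le_or_gt |a| m with h | h
      · push_cast
        rw [icc_succ, Finset.sum_insert (by simp [Finset.mem_Icc]; try omega),
          Finset.sum_insert (by simp [Finset.mem_Icc]; try omega), ih a h]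
        have h1 : |a + -(m+1:ℤ)| = (m:ℤ)+1 - a := by
          rw [abs_of_nonpos (by omega)]; ring
        have h2 : |a + ((m:ℤ)+1)| = a + (m:ℤ)+1 := by
          have := abs_le.mp h
          rw [abs_of_nonneg (by omega)]; ring
        rw [h1, h2]; push_cast; ring
      · have habs : a = (m:ℤ)+1 ∨ a = -((m:ℤ)+1) := by
          rcases lt_abs.mp h with h2 | h2 <;> omega
        have hsum := sum_zero' (m+1)
        have hcard := card_icc' (m+1)
        rcases habs with rfl | rfl
        · have hk : ∀ b ∈ Finset.Icc (-((m:ℕ)+1:ℤ)) ((m:ℕ)+1:ℤ), |((m:ℤ)+1) + b| = ((m:ℤ)+1) + b := by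
            intro b hb; simp [Finset.mem_Icc] at hb
            rw [abs_of_nonneg (by omega)]
          push_cast
          rw [Finset.sum_congr rfl (by push_cast at hk ⊢; exact hk), Finset.sum_add_distrib]
          push_cast at hsum
          rw [hsum, Finset.sum_const]
          push_cast at hcard ⊢
          rw [hcard]
          ring
        · have hk : ∀ b ∈ Finset.Icc (-((m:ℕ)+1:ℤ)) ((m:ℕ)+1:ℤ), |(-((m:ℤ)+1)) + b| = ((m:ℤ)+1) - b := by
            intro b hb; simp [Finset.mem_Icc] at hb
            rw [abs_of_nonpos (by omega)]; ring
          push_cast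
          rw [Finset.sum_congr rfl (by push_cast at hk ⊢; exact hk), Finset.sum_sub_distrib]
          push_cast at hsum
          rw [hsum, Finset.sum_const]
          push_cast at hcard ⊢
          rw [hcard]
          ring

private lemma filt (n : ℕ) (s : ℤ) :
    Finset.filter (fun c => |s + c| ≤ (n:ℤ)) (Finset.Icc (-(n:ℤ)) n)
      = Finset.Icc (max (-(n:ℤ)) (-(n:ℤ) - s)) (min (n:ℤ) ((n:ℤ) - s)) := by
  ext c; simp [Finset.mem_Icc, abs_le]; omega

private lemma filt_card (n : ℕ) (s : ℤ) (hs : |s| ≤ 2*n) :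
    ((Finset.filter (fun c => |s + c| ≤ (n:ℤ)) (Finset.Icc (-(n:ℤ)) n)).card : ℤ)
      = 2*n + 1 - |s| := by
  rw [filt, Int.card_Icc]
  have hs' := abs_le.mp hs
  rcases abs_cases s with ⟨he, h0⟩ | ⟨he, h0⟩ <;> rw [he] <;>
    [rw [max_eq_left (by omega), min_eq_right (by omega)];
     rw [max_eq_right (by omega), min_eq_left (by omega)]] <;>
    rw [Int.toNat_of_nonneg (by omega)] <;> ring

/-- The finset of triples `(a,b,c)` with all coordinates and `a+b+c` in `[-n,n]`. -/
private noncomputable def S (n : ℕ) : Finset (ℤ × ℤ × ℤ) :=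
  (Finset.Icc (-(n:ℤ)) n ×ˢ (Finset.Icc (-(n:ℤ)) n ×ˢ Finset.Icc (-(n:ℤ)) n)).filter
    (fun t => |t.1 + t.2.1 + t.2.2| ≤ (n:ℤ))

private lemma card_S (n : ℕ) :
    3 * ((S n).card : ℤ) = (2*n+1)*(8*n^2+8*n+3) := by
  have h1 : (S n).card
      = ∑ a ∈ Finset.Icc (-(n:ℤ)) n, ∑ b ∈ Finset.Icc (-(n:ℤ)) n,
          (Finset.filter (fun c => |a + b + c| ≤ (n:ℤ)) (Finset.Icc (-(n:ℤ)) n)).card := by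
    rw [S, Finset.card_filter, Finset.sum_product]
    refine Finset.sum_congr rfl fun a _ => ?_
    rw [Finset.sum_product]
    refine Finset.sum_congr rfl fun b _ => ?_
    rw [Finset.card_filter]
  have h2 : ((S n).card : ℤ)
      = ∑ a ∈ Finset.Icc (-(n:ℤ)) n, ∑ b ∈ Finset.Icc (-(n:ℤ)) n, (2*(n:ℤ)+1 - |a + b|) := by
    rw [h1]
    push_cast
    refine Finset.sum_congr rfl fun a ha => Finset.sum_congr rfl fun b hb => ?_
    simp [Finset.mem_Icc] at ha hb
    have hs : |a + b| ≤ 2*(n:ℤ) := by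
      rcases abs_cases (a+b) with ⟨he, _⟩ | ⟨he, _⟩ <;> omega
    exact filt_card n (a+b) hs
  have h3 : ∀ a ∈ Finset.Icc (-(n:ℤ)) n,
      ∑ b ∈ Finset.Icc (-(n:ℤ)) n, (2*(n:ℤ)+1 - |a + b|)
        = (2*(n:ℤ)+1)*(2*n+1) - ((n:ℤ)*(n+1) + a^2) := by
    intro a ha
    simp [Finset.mem_Icc] at ha
    rw [Finset.sum_sub_distrib, sum_abs_add n a (abs_le.mpr ⟨ha.1, ha.2⟩),
      Finset.sum_const, card_icc' n]
    push_cast; ring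
  rw [h2, Finset.sum_congr rfl h3, Finset.sum_sub_distrib, Finset.sum_add_distrib,
    Finset.sum_const, Finset.sum_const, card_icc' n]
  have hsq := sum_sq' n
  simp only [nsmul_eq_mul]
  push_cast
  push_cast at hsq
  linear_combination -hsq

private lemma Akb_eq_S (n : ℕ) : Akb 3 n = (S n).card := by
  have e : {p : Fin 4 → ℤ // (∀ i, |p i| ≤ (n : ℤ)) ∧ ∑ i, p i = 0} ≃ {t : ℤ × ℤ × ℤ // t ∈ S n} := by
    refine ⟨fun p => ⟨(p.1 0, p.1 1, p.1 2), ?_⟩,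
      fun t => ⟨![t.1.1, t.1.2.1, t.1.2.2, -(t.1.1 + t.1.2.1 + t.1.2.2)], ?_, ?_⟩, ?_, ?_⟩
    · obtain ⟨p, hp, hsum⟩ := p
      have h0 := abs_le.mp (hp 0)
      have h1 := abs_le.mp (hp 1)
      have h2 := abs_le.mp (hp 2)
      have h3 := abs_le.mp (hp 3)
      rw [Fin.sum_univ_four] at hsum
      simp only [S, Finset.mem_filter, Finset.mem_product, Finset.mem_Icc]
      refine ⟨⟨⟨h0.1, h0.2⟩, ⟨h1.1, h1.2⟩, ⟨h2.1, h2.2⟩⟩, abs_le.mpr ⟨by omega, by omega⟩⟩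
    · obtain ⟨t, ht⟩ := t
      simp only [S, Finset.mem_filter, Finset.mem_product, Finset.mem_Icc] at ht
      obtain ⟨⟨h0, h1, h2⟩, h3⟩ := ht
      have h3' := abs_le.mp h3
      intro i
      fin_cases i <;> simp [abs_le] <;> omega
    · obtain ⟨t, ht⟩ := t
      simp [Fin.sum_univ_four]
    · rintro ⟨p, hp, hsum⟩
      apply Subtype.ext
      funext i
      rw [Fin.sum_univ_four] at hsum
      fin_cases i <;> simp <;> omega
    · rintro ⟨⟨a, b, c⟩, ht⟩
      apply Subtype.ext
      simp
  rw [Akb, Nat.card_congr e, Nat.card_eq_finsetCard]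

private lemma Akb_formula (n : ℕ) : 3 * Akb 3 n = 3 + 2 * n * (7 + 12 * n + 8 * n ^ 2) := by
  have h := card_S n
  rw [← Akb_eq_S] at h
  have : (3 * Akb 3 n : ℤ) = ((3 + 2 * n * (7 + 12 * n + 8 * n ^ 2) : ℕ) : ℤ) := by
    push_cast
    push_cast at h
    nlinarith [h]
  exact_mod_cast this

/-- bulk finset -/
private noncomputable def Bfin (n : ℕ) : Finset (Fin 4 → ℤ) :=
  (Fintype.piFinset fun _ => Finset.Icc (-(n:ℤ)) n).filter (fun p => ∑ i, p i = 0)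

private noncomputable def Sfin (n : ℕ) : Finset (Fin 4 → ℤ) :=
  (Fintype.piFinset fun _ => Finset.Icc (-(n:ℤ)) n).filter
    (fun p => (∃ i, |p i| = (n:ℤ)) ∧ ∑ i, p i = 0)

private lemma Akb_eq_Bfin (n : ℕ) : Akb 3 n = (Bfin n).card := by
  rw [Akb, Nat.card_congr (Equiv.subtypeEquivRight (q := fun p => p ∈ Bfin n) ?_),
    Nat.card_eq_finsetCard]
  intro p
  simp [Bfin, Fintype.mem_piFinset, Finset.mem_Icc, abs_le]

private lemma Aks_eq_Sfin (n : ℕ) : Aks 3 n = (Sfin n).card := by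
  rw [Aks, Nat.card_congr (Equiv.subtypeEquivRight (q := fun p => p ∈ Sfin n) ?_),
    Nat.card_eq_finsetCard]
  intro p
  simp [Sfin, Fintype.mem_piFinset, Finset.mem_Icc, abs_le, and_assoc]

private lemma Bfin_succ (n : ℕ) : Bfin (n+1) = Bfin n ∪ Sfin (n+1) := by
  ext p
  simp only [Bfin, Sfin, Finset.mem_filter, Finset.mem_union, Fintype.mem_piFinset,
    Finset.mem_Icc]
  constructor
  · rintro ⟨hall, hsum⟩
    by_cases h : ∀ i, -(n:ℤ) ≤ p i ∧ p i ≤ n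
    · exact Or.inl ⟨h, hsum⟩
    · push_neg at h
      refine Or.inr ⟨hall, ⟨?_, hsum⟩⟩
      obtain ⟨i, hi⟩ := h
      refine ⟨i, ?_⟩
      have := hall i
      push_cast at this ⊢
      rcases abs_cases (p i) with ⟨he, _⟩ | ⟨he, _⟩ <;> omega
  · rintro (⟨hall, hsum⟩ | ⟨hall, _, hsum⟩)
    · exact ⟨fun i => by have := hall i; push_cast; constructor <;> omega, hsum⟩
    · exact ⟨hall, hsum⟩

private lemma Bfin_disj (n : ℕ) : Disjoint (Bfin n) (Sfin (n+1)) := by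
  rw [Finset.disjoint_left]
  intro p hb hs
  simp only [Bfin, Sfin, Finset.mem_filter, Fintype.mem_piFinset, Finset.mem_Icc] at hb hs
  obtain ⟨i, hi⟩ := hs.2.1
  have := hb.1 i
  rcases abs_cases (p i) with ⟨he, _⟩ | ⟨he, _⟩ <;> push_cast at hi this <;> omega

private lemma Akb_succ (n : ℕ) : Akb 3 (n+1) = Akb 3 n + Aks 3 (n+1) := by
  rw [Akb_eq_Bfin, Akb_eq_Bfin, Aks_eq_Sfin, Bfin_succ, Finset.card_union_of_disjoint (Bfin_disj n)]

theorem A3_bulk_surface :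
    (∀ n : ℕ, 3 * Akb 3 n = 3 + 2 * n * (7 + 12 * n + 8 * n ^ 2)) ∧
    (∀ n : ℕ, 1 ≤ n → Aks 3 n = 2 + 16 * n ^ 2) := by
  refine ⟨Akb_formula, ?_⟩
  intro n hn
  obtain ⟨m, rfl⟩ : ∃ m, n = m + 1 := ⟨n - 1, by omega⟩
  have e1 := Akb_formula m
  have e2 := Akb_formula (m+1)
  have hp := Akb_succ m
  have h3 : 3 * Aks 3 (m+1) = 3 * (2 + 16 * (m+1)^2) := by nlinarith [e1, e2, hp]
  omega
end

section
/- For every integer n ≥ 0, 315·A_7^b(n) = (2n+1)(315 + 2568n + 10936n² + 26400n³ + 37360n⁴ + 28992n⁵ + 9664n⁶). -/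
open Finset

/-- counting function: vectors in the box `[-n,n]^k` with coordinate sum `s`. -/
noncomputable def cnt (n k : ℕ) (s : ℤ) : ℕ :=
  ((Fintype.piFinset fun _ : Fin k => Finset.Icc (-(n:ℤ)) (n:ℤ)).filter
    (fun p => ∑ i, p i = s)).card

lemma cnt_zero (n : ℕ) (s : ℤ) : cnt n 0 s = if s = 0 then 1 else 0 := by
  unfold cnt
  rcases eq_or_ne s 0 with h | h <;> simp [h, Finset.filter_eq_empty_iff, eq_comm]

lemma cnt_succ (n k : ℕ) (s : ℤ) :
    cnt n (k+1) s = ∑ j ∈ Finset.Icc (-(n:ℤ)) (n:ℤ), cnt n k (s - j) := by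
  unfold cnt
  rw [Finset.card_eq_sum_card_fiberwise
    (f := fun p : Fin (k+1) → ℤ => p 0)
    (t := Finset.Icc (-(n:ℤ)) (n:ℤ))
    (fun p hp => by
      simp only [Finset.mem_coe, Finset.mem_filter, Fintype.mem_piFinset] at hp ⊢
      exact hp.1 0)]
  refine Finset.sum_congr rfl fun j hj => ?_
  refine Finset.card_nbij' (fun p => Fin.tail p) (fun q => Fin.cons j q) ?_ ?_ ?_ ?_
  · intro p hp
    simp only [Finset.mem_coe, Finset.mem_filter, Fintype.mem_piFinset, Fin.sum_univ_succ] at hp ⊢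
    obtain ⟨⟨hbox, hsum⟩, hp0⟩ := hp
    refine ⟨fun i => hbox i.succ, ?_⟩
    rw [hp0] at hsum
    have : ∑ i : Fin k, Fin.tail p i = ∑ i : Fin k, p i.succ := rfl
    rw [this]; omega
  · intro q hq
    simp only [Finset.mem_coe, Finset.mem_filter, Fintype.mem_piFinset, Fin.sum_univ_succ,
      Fin.cons_zero, Fin.cons_succ] at hq ⊢
    obtain ⟨hbox, hsum⟩ := hq
    refine ⟨⟨fun i => ?_, by omega⟩, trivial⟩
    cases i using Fin.cases with
    | zero => simpa using hj
    | succ i => simpa using hbox i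
  · intro p hp
    simp only [Finset.mem_coe, Finset.mem_filter] at hp
    show Fin.cons j (Fin.tail p) = p
    rw [← hp.2]
    exact Fin.cons_self_tail p
  · intro q hq
    simp only []
    funext i
    simp [Fin.tail]

lemma cnt_supp (n k : ℕ) (s : ℤ) (h : (k:ℤ) * n < |s|) : cnt n k s = 0 := by
  induction k generalizing s with
  | zero =>
    rw [cnt_zero]
    simp only [Nat.cast_zero, zero_mul] at h
    have : s ≠ 0 := by rintro rfl; simp at h
    simp [this]
  | succ k ih =>
    rw [cnt_succ]
    refine Finset.sum_eq_zero fun j hj => ?_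
    rw [Finset.mem_Icc] at hj
    refine ih (s - j) ?_
    have h1 : |s| - |j| ≤ |s - j| := abs_sub_abs_le_abs_sub s j
    have h2 : |j| ≤ (n:ℤ) := abs_le.2 hj
    push_cast at h ⊢
    linarith

lemma cnt_neg (n k : ℕ) (s : ℤ) : cnt n k (-s) = cnt n k s := by
  unfold cnt
  refine Finset.card_nbij' (fun p => -p) (fun p => -p) ?_ ?_ ?_ ?_ <;>
    intro p hp <;>
    simp only [Finset.mem_coe, Finset.mem_filter, Fintype.mem_piFinset, Finset.mem_Icc, Pi.neg_apply,
      Finset.sum_neg_distrib] at hp ⊢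
  · exact ⟨fun i => by have := hp.1 i; omega, by omega⟩
  · exact ⟨fun i => by have := hp.1 i; omega, by omega⟩
  · funext i; simp
  · funext i; simp

lemma cnt_conv (n a : ℕ) : ∀ (b : ℕ) (s : ℤ),
    cnt n (a + b) s
      = ∑ t ∈ Finset.Icc (-((a*n : ℕ):ℤ)) ((a*n : ℕ):ℤ), cnt n a t * cnt n b (s - t) := by
  intro b
  induction b with
  | zero =>
    intro s
    have hsum : ∀ t ∈ Finset.Icc (-((a*n : ℕ):ℤ)) ((a*n : ℕ):ℤ),
        cnt n a t * cnt n 0 (s - t) = if t = s then cnt n a t else 0 := by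
      intro t _
      rw [cnt_zero]
      rcases eq_or_ne t s with h | h
      · simp [h]
      · have : s - t ≠ 0 := by omega
        simp [h, this]
    rw [Finset.sum_congr rfl hsum, Finset.sum_ite_eq' _ s (fun t => cnt n a t)]
    by_cases hs : s ∈ Finset.Icc (-((a*n : ℕ):ℤ)) ((a*n : ℕ):ℤ)
    · rw [if_pos hs]; rfl
    · rw [if_neg hs]
      rw [Finset.mem_Icc] at hs
      have : (a:ℤ) * n < |s| := by push_cast at hs ⊢; rcases abs_cases s with ⟨h1,h2⟩|⟨h1,h2⟩ <;> omega
      simp [cnt_supp n a s this]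
  | succ b ih =>
    intro s
    have : a + (b + 1) = (a + b) + 1 := rfl
    rw [this, cnt_succ]
    have step : ∀ j ∈ Finset.Icc (-(n:ℤ)) (n:ℤ),
        cnt n (a+b) (s - j)
          = ∑ t ∈ Finset.Icc (-((a*n : ℕ):ℤ)) ((a*n : ℕ):ℤ),
              cnt n a t * cnt n b (s - j - t) := fun j _ => ih (s - j)
    rw [Finset.sum_congr rfl step, Finset.sum_comm]
    refine Finset.sum_congr rfl fun t _ => ?_
    rw [← Finset.mul_sum, cnt_succ]
    congr 1
    refine Finset.sum_congr rfl fun j _ => ?_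
    congr 1
    ring

lemma cnt_one (n : ℕ) (s : ℤ) : cnt n 1 s = if |s| ≤ (n:ℤ) then 1 else 0 := by
  rw [cnt_succ]
  have hsum : ∀ j ∈ Finset.Icc (-(n:ℤ)) (n:ℤ),
      cnt n 0 (s - j) = if j = s then 1 else 0 := by
    intro j _
    rw [cnt_zero]
    rcases eq_or_ne j s with h | h
    · simp [h]
    · have : s - j ≠ 0 := by omega
      simp [h, this]
  rw [Finset.sum_congr rfl hsum, Finset.sum_ite_eq' _ s (fun _ => 1)]
  by_cases hs : |s| ≤ (n:ℤ)
  · rw [if_pos hs, if_pos (Finset.mem_Icc.2 (abs_le.1 hs))]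
  · rw [if_neg hs, if_neg]
    rw [Finset.mem_Icc]
    intro h
    exact hs (abs_le.2 h)

lemma cnt_two (n : ℕ) (s : ℤ) (h0 : 0 ≤ s) (h2 : s ≤ 2*(n:ℤ)) :
    (cnt n 2 s : ℤ) = 2*(n:ℤ) + 1 - s := by
  rw [cnt_succ]
  have hsum : ∀ j ∈ Finset.Icc (-(n:ℤ)) (n:ℤ),
      cnt n 1 (s - j) = if s - (n:ℤ) ≤ j then 1 else 0 := by
    intro j hj
    rw [Finset.mem_Icc] at hj
    rw [cnt_one]
    rcases le_or_gt (s - (n:ℤ)) j with h | h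
    · rw [if_pos (abs_le.2 (by omega)), if_pos h]
    · rw [if_neg (by rw [abs_le]; omega), if_neg (by omega)]
  rw [Finset.sum_congr rfl hsum, Finset.sum_boole]
  have : (Finset.Icc (-(n:ℤ)) (n:ℤ)).filter (fun j => s - (n:ℤ) ≤ j)
      = Finset.Icc (s - (n:ℤ)) (n:ℤ) := by
    ext j
    simp only [Finset.mem_filter, Finset.mem_Icc]
    omega
  rw [this, Int.card_Icc]
  push_cast
  omega

lemma sum_Ioc_eq (f : ℤ → ℤ) (a b : ℤ) :
    ∑ x ∈ Finset.Ioc a b, f x = ∑ i ∈ Finset.range (b - a).toNat, f (a + 1 + (i:ℤ)) := by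
  symm
  refine Finset.sum_nbij' (fun i : ℕ => a + 1 + (i:ℤ)) (fun x : ℤ => (x - a - 1).toNat)
    ?_ ?_ ?_ ?_ ?_ <;>
      intro y hy <;>
      simp only [Finset.mem_Ioc, Finset.mem_range] at hy ⊢ <;>
      omega

lemma sum_quad (α β γ δ : ℤ) : ∀ m : ℕ,
    6 * ∑ i ∈ Finset.range m, (α + β*(i:ℤ)) * (γ + δ*(i:ℤ))
      = 6*α*γ*(m:ℤ) + 3*(α*δ+β*γ)*((m:ℤ)^2-(m:ℤ)) + β*δ*(2*(m:ℤ)^3-3*(m:ℤ)^2+(m:ℤ)) := by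
  intro m
  induction m with
  | zero => simp
  | succ m ih =>
    rw [Finset.sum_range_succ, mul_add, ih]
    push_cast
    ring

lemma quad_Ioc (a b α β γ δ : ℤ) (h : a ≤ b) :
    6 * ∑ u ∈ Finset.Ioc a b, (α + β*u) * (γ + δ*u)
      = 6*(α+β*(a+1))*(γ+δ*(a+1))*(b-a)
        + 3*((α+β*(a+1))*δ+β*(γ+δ*(a+1)))*((b-a)^2-(b-a))
        + β*δ*(2*(b-a)^3-3*(b-a)^2+(b-a)) := by
  rw [sum_Ioc_eq]
  have h1 : ∀ i ∈ Finset.range (b - a).toNat,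
      (α + β*((a + 1 + (i:ℤ)))) * (γ + δ*((a + 1 + (i:ℤ))))
        = ((α+β*(a+1)) + β*(i:ℤ)) * ((γ+δ*(a+1)) + δ*(i:ℤ)) := fun i _ => by ring
  rw [Finset.sum_congr rfl h1, sum_quad]
  have h2 : (((b - a).toNat : ℤ)) = b - a := Int.toNat_of_nonneg (by omega)
  rw [h2]

lemma Icc_eq_Ioc (a b : ℤ) : Finset.Icc a b = Finset.Ioc (a - 1) b := by
  ext x
  simp only [Finset.mem_Icc, Finset.mem_Ioc]
  omega

lemma sum_Ioc_split (f : ℤ → ℤ) (a b c : ℤ) (h1 : a ≤ b) (h2 : b ≤ c) :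
    ∑ x ∈ Finset.Ioc a c, f x = ∑ x ∈ Finset.Ioc a b, f x + ∑ x ∈ Finset.Ioc b c, f x := by
  rw [← Finset.Ioc_union_Ioc_eq_Ioc h1 h2, Finset.sum_union]
  rw [Finset.disjoint_left]
  intro x hx hx'
  rw [Finset.mem_Ioc] at hx hx'
  omega

lemma cnt_four_conv (n : ℕ) (t : ℤ) :
    (cnt n 4 t : ℤ) = ∑ u ∈ Finset.Icc (-(2*(n:ℤ))) (2*(n:ℤ)),
      (cnt n 2 u : ℤ) * (cnt n 2 (t - u) : ℤ) := by
  have h := cnt_conv n 2 2 t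
  rw [show (2+2 : ℕ) = 4 from rfl] at h
  have h2 : ((2*n : ℕ):ℤ) = 2*(n:ℤ) := by push_cast; ring
  rw [h]
  push_cast [h2]
  rfl

lemma cnt_four_a (n : ℕ) (t : ℤ) (h0 : 0 ≤ t) (ht : t ≤ 2*(n:ℤ)) :
    6 * (cnt n 4 t : ℤ)
      = 32 * (n:ℤ)^3 + 48 * (n:ℤ)^2 + (-12) * (n:ℤ) * t^2 + 28 * (n:ℤ)
        + 3 * t^3 + (-6) * t^2 + (-3) * t + 6 := by
  rw [cnt_four_conv, Icc_eq_Ioc]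
  rw [sum_Ioc_split _ (-(2*(n:ℤ)) - 1) (t - 2*(n:ℤ) - 1) (2*(n:ℤ)) (by omega) (by omega),
      sum_Ioc_split _ (t - 2*(n:ℤ) - 1) 0 (2*(n:ℤ)) (by omega) (by omega),
      sum_Ioc_split _ 0 t (2*(n:ℤ)) h0 ht]
  have p1 : ∑ u ∈ Finset.Ioc (-(2*(n:ℤ)) - 1) (t - 2*(n:ℤ) - 1),
      (cnt n 2 u : ℤ) * (cnt n 2 (t - u) : ℤ) = 0 := by
    refine Finset.sum_eq_zero fun u hu => ?_
    rw [Finset.mem_Ioc] at hu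
    have hz : cnt n 2 (t - u) = 0 := by
      refine cnt_supp n 2 _ ?_
      rw [abs_of_nonneg (by omega)]
      push_cast
      omega
    simp [hz]
  have p2 : ∑ u ∈ Finset.Ioc (t - 2*(n:ℤ) - 1) 0,
      (cnt n 2 u : ℤ) * (cnt n 2 (t - u) : ℤ)
      = ∑ u ∈ Finset.Ioc (t - 2*(n:ℤ) - 1) 0, (2*(n:ℤ)+1 + 1*u) * (2*(n:ℤ)+1-t + 1*u) := by
    refine Finset.sum_congr rfl fun u hu => ?_
    rw [Finset.mem_Ioc] at hu
    have e1 : (cnt n 2 u : ℤ) = 2*(n:ℤ) + 1 + u := by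
      rw [← cnt_neg n 2 u, cnt_two n (-u) (by omega) (by omega)]
      ring
    rw [e1, cnt_two n (t - u) (by omega) (by omega)]
    ring
  have p3 : ∑ u ∈ Finset.Ioc 0 t,
      (cnt n 2 u : ℤ) * (cnt n 2 (t - u) : ℤ)
      = ∑ u ∈ Finset.Ioc 0 t, (2*(n:ℤ)+1 + (-1)*u) * (2*(n:ℤ)+1-t + 1*u) := by
    refine Finset.sum_congr rfl fun u hu => ?_
    rw [Finset.mem_Ioc] at hu
    rw [cnt_two n u (by omega) (by omega), cnt_two n (t - u) (by omega) (by omega)]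
    ring
  have p4 : ∑ u ∈ Finset.Ioc t (2*(n:ℤ)),
      (cnt n 2 u : ℤ) * (cnt n 2 (t - u) : ℤ)
      = ∑ u ∈ Finset.Ioc t (2*(n:ℤ)), (2*(n:ℤ)+1 + (-1)*u) * (2*(n:ℤ)+1+t + (-1)*u) := by
    refine Finset.sum_congr rfl fun u hu => ?_
    rw [Finset.mem_Ioc] at hu
    have e2 : (cnt n 2 (t - u) : ℤ) = 2*(n:ℤ) + 1 - (u - t) := by
      have h' : t - u = -(u - t) := by ring
      rw [h', cnt_neg n 2 (u - t), cnt_two n (u - t) (by omega) (by omega)]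
    rw [e2, cnt_two n u (by omega) (by omega)]
    ring
  rw [p1, p2, p3, p4]
  have q2 := quad_Ioc (t - 2*(n:ℤ) - 1) 0 (2*(n:ℤ)+1) 1 (2*(n:ℤ)+1-t) 1 (by omega)
  have q3 := quad_Ioc 0 t (2*(n:ℤ)+1) (-1) (2*(n:ℤ)+1-t) 1 h0
  have q4 := quad_Ioc t (2*(n:ℤ)) (2*(n:ℤ)+1) (-1) (2*(n:ℤ)+1+t) (-1) ht
  linear_combination q2 + q3 + q4

lemma cnt_four_b (n : ℕ) (t : ℤ) (h0 : 2*(n:ℤ) ≤ t) (ht : t ≤ 4*(n:ℤ)) :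
    6 * (cnt n 4 t : ℤ)
      = 64 * (n:ℤ)^3 + (-48) * (n:ℤ)^2 * t + 96 * (n:ℤ)^2 + 12 * (n:ℤ) * t^2
        + (-48) * (n:ℤ) * t + 44 * (n:ℤ) + (-1) * t^3 + 6 * t^2 + (-11) * t + 6 := by
  rw [cnt_four_conv, Icc_eq_Ioc]
  rw [sum_Ioc_split _ (-(2*(n:ℤ)) - 1) (t - 2*(n:ℤ) - 1) (2*(n:ℤ)) (by omega) (by omega)]
  have p1 : ∑ u ∈ Finset.Ioc (-(2*(n:ℤ)) - 1) (t - 2*(n:ℤ) - 1),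
      (cnt n 2 u : ℤ) * (cnt n 2 (t - u) : ℤ) = 0 := by
    refine Finset.sum_eq_zero fun u hu => ?_
    rw [Finset.mem_Ioc] at hu
    have hz : cnt n 2 (t - u) = 0 := by
      refine cnt_supp n 2 _ ?_
      rw [abs_of_nonneg (by omega)]
      push_cast
      omega
    simp [hz]
  have p2 : ∑ u ∈ Finset.Ioc (t - 2*(n:ℤ) - 1) (2*(n:ℤ)),
      (cnt n 2 u : ℤ) * (cnt n 2 (t - u) : ℤ)
      = ∑ u ∈ Finset.Ioc (t - 2*(n:ℤ) - 1) (2*(n:ℤ)), (2*(n:ℤ)+1 + (-1)*u) * (2*(n:ℤ)+1-t + 1*u) := by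
    refine Finset.sum_congr rfl fun u hu => ?_
    rw [Finset.mem_Ioc] at hu
    rw [cnt_two n u (by omega) (by omega), cnt_two n (t - u) (by omega) (by omega)]
    ring
  rw [p1, p2]
  have q2 := quad_Ioc (t - 2*(n:ℤ) - 1) (2*(n:ℤ)) (2*(n:ℤ)+1) (-1) (2*(n:ℤ)+1-t) 1 (by omega)
  linear_combination q2

lemma sumSq1 (n : ℕ) : ∀ m : ℕ,
    70 * ∑ i ∈ Finset.range m,
      (32 * (n:ℤ)^3 + 48 * (n:ℤ)^2 + (-12) * (n:ℤ) * ((i:ℤ)+1)^2 + 28 * (n:ℤ)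
        + 3 * ((i:ℤ)+1)^3 + (-6) * ((i:ℤ)+1)^2 + (-3) * ((i:ℤ)+1) + 6)^2
    = 71680 * (n:ℤ)^6 * (m:ℤ) + 215040 * (n:ℤ)^5 * (m:ℤ) + (-17920) * (n:ℤ)^4 * (m:ℤ)^3 + (-26880) * (n:ℤ)^4 * (m:ℤ)^2 + 277760 * (n:ℤ)^4 * (m:ℤ) + 3360 * (n:ℤ)^3 * (m:ℤ)^4 + (-29120) * (n:ℤ)^3 * (m:ℤ)^3 + (-57120) * (n:ℤ)^3 * (m:ℤ)^2 + 190400 * (n:ℤ)^3 * (m:ℤ) + 2016 * (n:ℤ)^2 * (m:ℤ)^5 + 10080 * (n:ℤ)^2 * (m:ℤ)^4 + (-15680) * (n:ℤ)^2 * (m:ℤ)^3 + (-48720) * (n:ℤ)^2 * (m:ℤ)^2 + 70224 * (n:ℤ)^2 * (m:ℤ) + (-840) * (n:ℤ) * (m:ℤ)^6 + (-504) * (n:ℤ) * (m:ℤ)^5 + 7140 * (n:ℤ) * (m:ℤ)^4 + 560 * (n:ℤ) * (m:ℤ)^3 + (-18060) * (n:ℤ) * (m:ℤ)^2 + 11704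 * (n:ℤ) * (m:ℤ) + 90 * (m:ℤ)^7 + (-105) * (m:ℤ)^6 + (-693) * (m:ℤ)^5 + 840 * (m:ℤ)^4 + 1365 * (m:ℤ)^3 + (-1995) * (m:ℤ)^2 + 498 * (m:ℤ) := by
  intro m
  induction m with
  | zero => simp
  | succ m ih =>
    rw [Finset.sum_range_succ, mul_add, ih]
    push_cast
    ring

lemma sumSq2 (n : ℕ) : ∀ m : ℕ,
    70 * ∑ i ∈ Finset.range m,
      (64 * (n:ℤ)^3 + (-48) * (n:ℤ)^2 * (2*(n:ℤ)+1+(i:ℤ)) + 96 * (n:ℤ)^2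
        + 12 * (n:ℤ) * (2*(n:ℤ)+1+(i:ℤ))^2 + (-48) * (n:ℤ) * (2*(n:ℤ)+1+(i:ℤ)) + 44 * (n:ℤ)
        + (-1) * (2*(n:ℤ)+1+(i:ℤ))^3 + 6 * (2*(n:ℤ)+1+(i:ℤ))^2 + (-11) * (2*(n:ℤ)+1+(i:ℤ)) + 6)^2
    = 4480 * (n:ℤ)^6 * (m:ℤ) + (-6720) * (n:ℤ)^5 * (m:ℤ)^2 + 20160 * (n:ℤ)^5 * (m:ℤ) + 5600 * (n:ℤ)^4 * (m:ℤ)^3 + (-25200) * (n:ℤ)^4 * (m:ℤ)^2 + 34160 * (n:ℤ)^4 * (m:ℤ) + (-2800) * (n:ℤ)^3 * (m:ℤ)^4 + 16800 * (n:ℤ)^3 * (m:ℤ)^3 + (-34160) * (n:ℤ)^3 * (m:ℤ)^2 + 26880 * (n:ℤ)^3 * (m:ℤ) + 840 * (n:ℤ)^2 * (m:ℤ)^5 + (-6300) * (n:ℤ)^2 * (m:ℤ)^4 + 17080 * (n:ℤ)^2 * (m:ℤ)^3 + (-20160) * (n:ℤ)^2 * (m:ℤ)^2 + 9660 * (n:ℤ)^2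 * (m:ℤ) + (-140) * (n:ℤ) * (m:ℤ)^6 + 1260 * (n:ℤ) * (m:ℤ)^5 + (-4270) * (n:ℤ) * (m:ℤ)^4 + 6720 * (n:ℤ) * (m:ℤ)^3 + (-4830) * (n:ℤ) * (m:ℤ)^2 + 1260 * (n:ℤ) * (m:ℤ) + 10 * (m:ℤ)^7 + (-105) * (m:ℤ)^6 + 427 * (m:ℤ)^5 + (-840) * (m:ℤ)^4 + 805 * (m:ℤ)^3 + (-315) * (m:ℤ)^2 + 18 * (m:ℤ) := by
  intro m
  induction m with
  | zero => simp
  | succ m ih =>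
    rw [Finset.sum_range_succ, mul_add, ih]
    push_cast
    ring

lemma main_int (n : ℕ) :
    11340 * (cnt n 8 0 : ℤ)
      = 36 * ((2*(n:ℤ)+1) * (315 + 2568*(n:ℤ) + 10936*(n:ℤ)^2 + 26400*(n:ℤ)^3
          + 37360*(n:ℤ)^4 + 28992*(n:ℤ)^5 + 9664*(n:ℤ)^6)) := by
  have h8 : (cnt n 8 0 : ℤ) = ∑ u ∈ Finset.Icc (-(4*(n:ℤ))) (4*(n:ℤ)),
      (cnt n 4 u : ℤ) * (cnt n 4 (0 - u) : ℤ) := by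
    have h := cnt_conv n 4 4 0
    rw [show (4+4 : ℕ) = 8 from rfl] at h
    have h2 : ((4*n : ℕ):ℤ) = 4*(n:ℤ) := by push_cast; ring
    rw [h]
    push_cast [h2]
    rfl
  have e1 : ∑ u ∈ Finset.Icc (-(4*(n:ℤ))) (4*(n:ℤ)),
        (cnt n 4 u : ℤ) * (cnt n 4 (0 - u) : ℤ)
      = ∑ u ∈ Finset.Icc (-(4*(n:ℤ))) (4*(n:ℤ)), (cnt n 4 u : ℤ) * (cnt n 4 u : ℤ) := by
    refine Finset.sum_congr rfl fun u _ => ?_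
    rw [zero_sub, cnt_neg]
  have e2 : ∑ u ∈ Finset.Icc (-(4*(n:ℤ))) (4*(n:ℤ)), (cnt n 4 u : ℤ) * (cnt n 4 u : ℤ)
      = ∑ i ∈ Finset.range (8*n+1),
          (cnt n 4 ((i:ℤ) - 4*(n:ℤ)) : ℤ) * (cnt n 4 ((i:ℤ) - 4*(n:ℤ)) : ℤ) := by
    rw [Icc_eq_Ioc, sum_Ioc_eq (fun u => (cnt n 4 u : ℤ) * (cnt n 4 u : ℤ))]
    have hN : ((4*(n:ℤ)) - (-(4*(n:ℤ)) - 1)).toNat = 8*n+1 := by omega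
    rw [hN]
    refine Finset.sum_congr rfl fun i _ => ?_
    have harg : (-(4*(n:ℤ)) - 1 + 1 + (i:ℤ)) = (i:ℤ) - 4*(n:ℤ) := by ring
    rw [harg]
  have e3 : ∑ i ∈ Finset.range (8*n+1),
        (cnt n 4 ((i:ℤ) - 4*(n:ℤ)) : ℤ) * (cnt n 4 ((i:ℤ) - 4*(n:ℤ)) : ℤ)
      = (∑ i ∈ Finset.range (4*n+1),
          (cnt n 4 ((i:ℤ) - 4*(n:ℤ)) : ℤ) * (cnt n 4 ((i:ℤ) - 4*(n:ℤ)) : ℤ))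
        + ∑ i ∈ Finset.range (4*n),
            (cnt n 4 ((i:ℤ)+1) : ℤ) * (cnt n 4 ((i:ℤ)+1) : ℤ) := by
    rw [show 8*n+1 = (4*n+1) + 4*n by omega, Finset.sum_range_add]
    congr 1
    refine Finset.sum_congr rfl fun i _ => ?_
    have harg : (((4*n+1+i : ℕ)):ℤ) - 4*(n:ℤ) = (i:ℤ)+1 := by push_cast; ring
    rw [harg]
  have e4 : ∑ i ∈ Finset.range (4*n+1),
        (cnt n 4 ((i:ℤ) - 4*(n:ℤ)) : ℤ) * (cnt n 4 ((i:ℤ) - 4*(n:ℤ)) : ℤ)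
      = ∑ i ∈ Finset.range (4*n+1), (cnt n 4 (i:ℤ) : ℤ) * (cnt n 4 (i:ℤ) : ℤ) := by
    rw [← Finset.sum_range_reflect]
    refine Finset.sum_congr rfl fun i hi => ?_
    rw [Finset.mem_range] at hi
    have harg : (((4*n+1-1-i : ℕ)):ℤ) - 4*(n:ℤ) = -(i:ℤ) := by omega
    rw [harg, cnt_neg]
  have e5 : ∑ i ∈ Finset.range (4*n+1), (cnt n 4 (i:ℤ) : ℤ) * (cnt n 4 (i:ℤ) : ℤ)
      = (cnt n 4 ((0:ℕ):ℤ) : ℤ) * (cnt n 4 ((0:ℕ):ℤ) : ℤ)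
        + ∑ i ∈ Finset.range (4*n), (cnt n 4 ((i:ℤ)+1) : ℤ) * (cnt n 4 ((i:ℤ)+1) : ℤ) := by
    rw [Finset.sum_range_succ', add_comm]
    congr 1
    try refine Finset.sum_congr rfl fun i _ => by push_cast; ring_nf
  have e6 : ∑ i ∈ Finset.range (4*n), (cnt n 4 ((i:ℤ)+1) : ℤ) * (cnt n 4 ((i:ℤ)+1) : ℤ)
      = (∑ i ∈ Finset.range (2*n), (cnt n 4 ((i:ℤ)+1) : ℤ) * (cnt n 4 ((i:ℤ)+1) : ℤ))
        + ∑ i ∈ Finset.range (2*n),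
            (cnt n 4 (2*(n:ℤ)+1+(i:ℤ)) : ℤ) * (cnt n 4 (2*(n:ℤ)+1+(i:ℤ)) : ℤ) := by
    rw [show 4*n = 2*n + 2*n by omega, Finset.sum_range_add]
    congr 1
    refine Finset.sum_congr rfl fun i _ => ?_
    have harg : (((2*n+i : ℕ)):ℤ) + 1 = 2*(n:ℤ)+1+(i:ℤ) := by push_cast; ring
    rw [harg]
  -- closed forms
  have h0 := cnt_four_a n 0 le_rfl (by positivity)
  have h0' : 36 * ((cnt n 4 ((0:ℕ):ℤ) : ℤ) * (cnt n 4 ((0:ℕ):ℤ) : ℤ))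
      = (32 * (n:ℤ)^3 + 48 * (n:ℤ)^2 + 28 * (n:ℤ) + 6)^2 := by
    have hc : ((0:ℕ):ℤ) = (0:ℤ) := by norm_num
    rw [hc]
    linear_combination (6 * (cnt n 4 (0:ℤ) : ℤ)
      + (32 * (n:ℤ)^3 + 48 * (n:ℤ)^2 + 28 * (n:ℤ) + 6)) * h0
  have hE1 : 36 * ∑ i ∈ Finset.range (2*n),
        (cnt n 4 ((i:ℤ)+1) : ℤ) * (cnt n 4 ((i:ℤ)+1) : ℤ)
      = ∑ i ∈ Finset.range (2*n),
        (32 * (n:ℤ)^3 + 48 * (n:ℤ)^2 + (-12) * (n:ℤ) * ((i:ℤ)+1)^2 + 28 * (n:ℤ)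
          + 3 * ((i:ℤ)+1)^3 + (-6) * ((i:ℤ)+1)^2 + (-3) * ((i:ℤ)+1) + 6)^2 := by
    rw [Finset.mul_sum]
    refine Finset.sum_congr rfl fun i hi => ?_
    rw [Finset.mem_range] at hi
    have hb := cnt_four_a n ((i:ℤ)+1) (by omega) (by push_cast; omega)
    linear_combination (6 * (cnt n 4 ((i:ℤ)+1) : ℤ)
      + (32 * (n:ℤ)^3 + 48 * (n:ℤ)^2 + (-12) * (n:ℤ) * ((i:ℤ)+1)^2 + 28 * (n:ℤ)
          + 3 * ((i:ℤ)+1)^3 + (-6) * ((i:ℤ)+1)^2 + (-3) * ((i:ℤ)+1) + 6)) * hb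
  have hE2 : 36 * ∑ i ∈ Finset.range (2*n),
        (cnt n 4 (2*(n:ℤ)+1+(i:ℤ)) : ℤ) * (cnt n 4 (2*(n:ℤ)+1+(i:ℤ)) : ℤ)
      = ∑ i ∈ Finset.range (2*n),
        (64 * (n:ℤ)^3 + (-48) * (n:ℤ)^2 * (2*(n:ℤ)+1+(i:ℤ)) + 96 * (n:ℤ)^2
          + 12 * (n:ℤ) * (2*(n:ℤ)+1+(i:ℤ))^2 + (-48) * (n:ℤ) * (2*(n:ℤ)+1+(i:ℤ)) + 44 * (n:ℤ)
          + (-1) * (2*(n:ℤ)+1+(i:ℤ))^3 + 6 * (2*(n:ℤ)+1+(i:ℤ))^2 + (-11) * (2*(n:ℤ)+1+(i:ℤ)) + 6)^2 := by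
    rw [Finset.mul_sum]
    refine Finset.sum_congr rfl fun i hi => ?_
    rw [Finset.mem_range] at hi
    have hb := cnt_four_b n (2*(n:ℤ)+1+(i:ℤ)) (by push_cast; omega) (by push_cast; omega)
    linear_combination (6 * (cnt n 4 (2*(n:ℤ)+1+(i:ℤ)) : ℤ)
      + (64 * (n:ℤ)^3 + (-48) * (n:ℤ)^2 * (2*(n:ℤ)+1+(i:ℤ)) + 96 * (n:ℤ)^2
          + 12 * (n:ℤ) * (2*(n:ℤ)+1+(i:ℤ))^2 + (-48) * (n:ℤ) * (2*(n:ℤ)+1+(i:ℤ)) + 44 * (n:ℤ)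
          + (-1) * (2*(n:ℤ)+1+(i:ℤ))^3 + 6 * (2*(n:ℤ)+1+(i:ℤ))^2 + (-11) * (2*(n:ℤ)+1+(i:ℤ)) + 6)) * hb
  have hQ1 := sumSq1 n (2*n)
  have hQ2 := sumSq2 n (2*n)
  rw [show (((2*n : ℕ)):ℤ) = 2*(n:ℤ) by push_cast; ring] at hQ1 hQ2
  have hfinal : (cnt n 8 0 : ℤ)
      = (cnt n 4 ((0:ℕ):ℤ) : ℤ) * (cnt n 4 ((0:ℕ):ℤ) : ℤ)
        + ((∑ i ∈ Finset.range (2*n), (cnt n 4 ((i:ℤ)+1) : ℤ) * (cnt n 4 ((i:ℤ)+1) : ℤ))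
            + ∑ i ∈ Finset.range (2*n),
                (cnt n 4 (2*(n:ℤ)+1+(i:ℤ)) : ℤ) * (cnt n 4 (2*(n:ℤ)+1+(i:ℤ)) : ℤ))
        + ((∑ i ∈ Finset.range (2*n), (cnt n 4 ((i:ℤ)+1) : ℤ) * (cnt n 4 ((i:ℤ)+1) : ℤ))
            + ∑ i ∈ Finset.range (2*n),
                (cnt n 4 (2*(n:ℤ)+1+(i:ℤ)) : ℤ) * (cnt n 4 (2*(n:ℤ)+1+(i:ℤ)) : ℤ)) := by
    rw [h8, e1, e2, e3, e4, e5, e6]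
    try ring
  linear_combination 11340 * hfinal + 315 * h0' + 630 * hE1 + 630 * hE2 + 9 * hQ1 + 9 * hQ2

lemma Akb_eq (k n : ℕ) : Akb k n = cnt n (k+1) 0 := by
  rw [Akb, cnt, ← Nat.card_eq_finsetCard]
  exact Nat.card_congr (Equiv.subtypeEquivRight fun p => by
    simp [Finset.mem_filter, Fintype.mem_piFinset, Finset.mem_Icc, abs_le])

theorem A7_bulk (n : ℕ) :
    315 * Akb 7 n = (2 * n + 1) * (315 + 2568 * n + 10936 * n ^ 2 + 26400 * n ^ 3
      + 37360 * n ^ 4 + 28992 * n ^ 5 + 9664 * n ^ 6) := by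
  have h := main_int n
  have h2 : Akb 7 n = cnt n 8 0 := Akb_eq 7 n
  zify
  rw [h2]
  push_cast at h ⊢
  linarith
end
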